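/- If π is an optimal partition of an FA game and C¹,…,Cᵐ are pairwise distinct coalitions of π with m ≥ 2, then SW(C¹ ∪ … ∪ Cᵐ) ≤ SW(C¹) + … + SW(Cᵐ) (no positive cut property: merging any sub-collection of coalitions of an optimal partition does not increase social welfare). -/

import Mathlib

open Finset

/-- FA utility of agent `i` with friend set `t` for a coalition `C` containing her:
`u_i(C) = |C ∩ F_i| − |C ∩ E_i| / n`, where `E_i = N \ (F_i ∪ {i})`. -/
def faUtil (n : ℕ) (t : Finset (Fin n)) (i : Fin n) (C : Finset (Fin n)) : ℚ :=
  ((C ∩ t).card : ℚ) - ((C \ (t ∪ {i})).card : ℚ) / (n : ℚ)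

/-- Social welfare of a single coalition: `SW(C) = Σ_{i ∈ C} u_i(C)`. -/
def faSWC (n : ℕ) (F : Fin n → Finset (Fin n)) (C : Finset (Fin n)) : ℚ :=
  ∑ i ∈ C, faUtil n (F i) i C

/-- Social welfare of a partition of the agents (`SW(π) = Σ_i u_i(π(i))`). -/
def faSW (n : ℕ) (F : Fin n → Finset (Fin n))
    (π : Finpartition (univ : Finset (Fin n))) : ℚ :=
  ∑ C ∈ π.parts, faSWC n F C

/-- No positive cut: merging any `m ≥ 2` pairwise distinct coalitions of an optimal
partition does not increase the social welfare:
`SW(C¹ ∪ … ∪ Cᵐ) ≤ SW(C¹) + … + SW(Cᵐ)`. -/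
theorem stmt18 (n : ℕ) (hn : 0 < n) (F : Fin n → Finset (Fin n)) (hF : ∀ j, j ∉ F j)
    (π : Finpartition (univ : Finset (Fin n)))
    (hopt : ∀ σ : Finpartition (univ : Finset (Fin n)), faSW n F σ ≤ faSW n F π)
    (m : ℕ) (hm : 2 ≤ m) (C : Fin m → Finset (Fin n))
    (hC : ∀ l, C l ∈ π.parts) (hinj : Function.Injective C) :
    faSWC n F (Finset.univ.biUnion C) ≤ ∑ l, faSWC n F (C l) := by
  classical
  set T : Finset (Finset (Fin n)) := Finset.image C Finset.univ with hT
  set S : Finset (Fin n) := Finset.univ.biUnion C with hS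
  have hTsub : T ⊆ π.parts := by
    intro D hD
    rw [hT, Finset.mem_image] at hD
    obtain ⟨l, -, rfl⟩ := hD
    exact hC l
  have hsubS : ∀ l, C l ⊆ S := fun l => Finset.subset_biUnion_of_mem C (mem_univ l)
  have hC0ne : (C ⟨0, by omega⟩).Nonempty := π.nonempty_of_mem_parts (hC _)
  have hSne : S.Nonempty := hC0ne.mono (hsubS _)
  have hSnotmem : S ∉ π.parts \ T := by
    intro hmem
    obtain ⟨h1, h2⟩ := Finset.mem_sdiff.mp hmem
    have hne : S ≠ C ⟨0, by omega⟩ := by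
      intro h
      exact h2 (by rw [hT, h]; exact Finset.mem_image_of_mem C (mem_univ _))
    have hdisj : Disjoint S (C ⟨0, by omega⟩) := π.disjoint h1 (hC _) hne
    obtain ⟨a, ha⟩ := hC0ne
    exact (Finset.disjoint_left.mp hdisj (hsubS _ ha)) ha
  -- S is disjoint with each part not in T
  have hSdisj : ∀ D ∈ π.parts \ T, Disjoint S D := by
    intro D hD
    obtain ⟨h1, h2⟩ := Finset.mem_sdiff.mp hD
    rw [hS, Finset.disjoint_biUnion_left]
    intro l _
    refine π.disjoint (hC l) h1 ?_
    intro h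
    exact h2 (by rw [hT, ← h]; exact Finset.mem_image_of_mem C (mem_univ _))
  have hsupT : T.sup id = S := by
    rw [hT, Finset.sup_image, hS, Finset.sup_eq_biUnion]
    rfl
  have hsup : (insert S (π.parts \ T)).sup id = Finset.univ := by
    rw [Finset.sup_insert]
    have h1 : T ∪ (π.parts \ T) = π.parts := Finset.union_sdiff_of_subset hTsub
    calc id S ⊔ (π.parts \ T).sup id = T.sup id ⊔ (π.parts \ T).sup id := by
          rw [hsupT]; rfl
      _ = (T ∪ (π.parts \ T)).sup id := (Finset.sup_union).symm
      _ = Finset.univ := by rw [h1, π.sup_parts]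
  have hPD : (π.parts : Set (Finset (Fin n))).PairwiseDisjoint id :=
    Finset.supIndep_iff_pairwiseDisjoint.mp π.supIndep
  have hindep : (insert S (π.parts \ T)).SupIndep id := by
    rw [Finset.supIndep_iff_pairwiseDisjoint]
    rw [Finset.coe_insert]
    refine Set.PairwiseDisjoint.insert ?_ ?_
    · exact hPD.subset (fun x hx => by
        simp only [Finset.coe_sdiff, Set.mem_diff] at hx
        exact hx.1)
    · intro D hD _
      exact (hSdisj D (by simpa using hD)).symm.symm
  have hbot : ⊥ ∉ insert S (π.parts \ T) := by
    rw [Finset.mem_insert]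
    rintro (h | h)
    · exact hSne.ne_empty h.symm
    · exact π.bot_notMem (Finset.mem_sdiff.mp h).1
  let σ : Finpartition (univ : Finset (Fin n)) := ⟨insert S (π.parts \ T), hindep, hsup, hbot⟩
  have hσ : faSW n F σ = faSWC n F S + ∑ D ∈ π.parts \ T, faSWC n F D := by
    show ∑ D ∈ insert S (π.parts \ T), faSWC n F D = _
    rw [Finset.sum_insert hSnotmem]
  have hπ : faSW n F π = (∑ D ∈ T, faSWC n F D) + ∑ D ∈ π.parts \ T, faSWC n F D := by
    rw [faSW, ← Finset.sum_union (Finset.disjoint_sdiff),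
      Finset.union_sdiff_of_subset hTsub]
  have hTsum : ∑ D ∈ T, faSWC n F D = ∑ l, faSWC n F (C l) := by
    rw [hT, Finset.sum_image (fun a _ b _ h => hinj h)]
  have := hopt σ
  rw [hσ, hπ, hTsum] at this
  linarith
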